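/- For the six-state model with parameters satisfying the row-sum constraints, the characteristic polynomial of P factors as charpoly(P) = charpoly(K) · (X − β₁)(X − β₂)(X − β₃), where K is the 3×3 quotient matrix with K_{ii} = a_i + b_i and K_{ij} = 2c_{ij} for i ≠ j, and β_r := a_r − b_r. Equivalently, the eigenvalue multiset of P is {1, κ₂, κ₃, β₁, β₂, β₃}, where 1, κ₂, κ₃ are the eigenvalues of K. -/

import Mathlib

open Matrix Polynomial

/-- The symmetric 6×6 transition matrix of the six-state model. -/
def sixStateP (a₁ a₂ a₃ b₁ b₂ b₃ c₁₂ c₁₃ c₂₃ : ℝ) : Matrix (Fin 6) (Fin 6) ℝ :=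
  !![a₁,  b₁,  c₁₂, c₁₂, c₁₃, c₁₃;
     b₁,  a₁,  c₁₂, c₁₂, c₁₃, c₁₃;
     c₁₂, c₁₂, a₂,  b₂,  c₂₃, c₂₃;
     c₁₂, c₁₂, b₂,  a₂,  c₂₃, c₂₃;
     c₁₃, c₁₃, c₂₃, c₂₃, a₃,  b₃;
     c₁₃, c₁₃, c₂₃, c₂₃, b₃,  a₃]

/-- The 3×3 quotient matrix `K` with `K_{ii} = a_i + b_i` and `K_{ij} = 2 c_{ij}`. -/
def quotientK (a₁ a₂ a₃ b₁ b₂ b₃ c₁₂ c₁₃ c₂₃ : ℝ) : Matrix (Fin 3) (Fin 3) ℝ :=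
  !![a₁ + b₁, 2 * c₁₂, 2 * c₁₃;
     2 * c₁₂, a₂ + b₂, 2 * c₂₃;
     2 * c₁₃, 2 * c₂₃, a₃ + b₃]

@[simp] lemma cons_val_five' {α : Type*} {m : ℕ} (x : α) (u : Fin (m + 5) → α) :
    Matrix.vecCons x u 5
      = Matrix.vecHead (Matrix.vecTail (Matrix.vecTail (Matrix.vecTail (Matrix.vecTail u)))) :=
  rfl

/-- Characteristic polynomial is invariant under conjugation. -/
lemma charpoly_conj_aux {n : ℕ} (U V M : Matrix (Fin n) (Fin n) ℝ)
    (hUV : U * V = 1) :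
    (U * M * V).charpoly = M.charpoly := by
  have hch : charmatrix (U * M * V)
      = U.map (C : ℝ →+* ℝ[X]) * charmatrix M * V.map (C : ℝ →+* ℝ[X]) := by
    have h1 : U.map (C : ℝ →+* ℝ[X]) * V.map (C : ℝ →+* ℝ[X]) = 1 := by
      rw [← Matrix.map_mul, hUV, Matrix.map_one _ (map_zero _) (map_one _)]
    rw [charmatrix, charmatrix, mul_sub, sub_mul]
    congr 1
    · rw [← (Matrix.scalar_commute X (fun r => Commute.all X r) (U.map (C : ℝ →+* ℝ[X]))).eq,
        mul_assoc, h1, mul_one]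
    · show (C.mapMatrix (U * M * V) : Matrix (Fin n) (Fin n) ℝ[X]) = _
      rw [_root_.map_mul, _root_.map_mul]; rfl
  rw [Matrix.charpoly, Matrix.charpoly, hch, det_mul, det_mul]
  have h2 : (U.map (C : ℝ →+* ℝ[X])).det * (V.map (C : ℝ →+* ℝ[X])).det = 1 := by
    rw [← det_mul, ← Matrix.map_mul, hUV, Matrix.map_one _ (map_zero _) (map_one _), det_one]
  calc (U.map (C : ℝ →+* ℝ[X])).det * (charmatrix M).det * (V.map (C : ℝ →+* ℝ[X])).det
      = (U.map (C : ℝ →+* ℝ[X])).det * (V.map (C : ℝ →+* ℝ[X])).det * (charmatrix M).det := by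
        ring
    _ = (charmatrix M).det := by rw [h2, one_mul]

noncomputable def hadU : Matrix (Fin 6) (Fin 6) ℝ :=
  !![1,1,0,0,0,0; 1,-1,0,0,0,0; 0,0,1,1,0,0; 0,0,1,-1,0,0; 0,0,0,0,1,1; 0,0,0,0,1,-1]

noncomputable def hadV : Matrix (Fin 6) (Fin 6) ℝ :=
  !![1/2,1/2,0,0,0,0; 1/2,-1/2,0,0,0,0; 0,0,1/2,1/2,0,0; 0,0,1/2,-1/2,0,0;
     0,0,0,0,1/2,1/2; 0,0,0,0,1/2,-1/2]

lemma one_fin_six : (1 : Matrix (Fin 6) (Fin 6) ℝ) =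
    !![1,0,0,0,0,0; 0,1,0,0,0,0; 0,0,1,0,0,0; 0,0,0,1,0,0; 0,0,0,0,1,0; 0,0,0,0,0,1] := by
  ext i j
  fin_cases i <;> fin_cases j <;> rfl

lemma hadUV : hadU * hadV = 1 := by
  rw [hadU, hadV, one_fin_six]
  ext i j
  fin_cases i <;> fin_cases j <;> norm_num [Matrix.mul_apply, Fin.sum_univ_succ]

noncomputable def sparseQ (a₁ a₂ a₃ b₁ b₂ b₃ c₁₂ c₁₃ c₂₃ : ℝ) : Matrix (Fin 6) (Fin 6) ℝ :=
  !![a₁+b₁, 0, 2*c₁₂, 0, 2*c₁₃, 0;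
     0, a₁-b₁, 0, 0, 0, 0;
     2*c₁₂, 0, a₂+b₂, 0, 2*c₂₃, 0;
     0, 0, 0, a₂-b₂, 0, 0;
     2*c₁₃, 0, 2*c₂₃, 0, a₃+b₃, 0;
     0, 0, 0, 0, 0, a₃-b₃]

lemma conj_eq (a₁ a₂ a₃ b₁ b₂ b₃ c₁₂ c₁₃ c₂₃ : ℝ) :
    hadU * sixStateP a₁ a₂ a₃ b₁ b₂ b₃ c₁₂ c₁₃ c₂₃ * hadV
      = sparseQ a₁ a₂ a₃ b₁ b₂ b₃ c₁₂ c₁₃ c₂₃ := by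
  rw [hadU, hadV, sixStateP, sparseQ]
  ext i j
  fin_cases i <;> fin_cases j <;> simp [Matrix.mul_apply, Fin.sum_univ_succ] <;> ring

/-- The interleaving equivalence `Fin 3 ⊕ Fin 3 ≃ Fin 6`. -/
def eIdx : Fin 3 ⊕ Fin 3 ≃ Fin 6 where
  toFun := Sum.elim ![0,2,4] ![1,3,5]
  invFun := ![Sum.inl 0, Sum.inr 0, Sum.inl 1, Sum.inr 1, Sum.inl 2, Sum.inr 2]
  left_inv := by decide
  right_inv := by decide

lemma sparse_eq (a₁ a₂ a₃ b₁ b₂ b₃ c₁₂ c₁₃ c₂₃ : ℝ) :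
    sparseQ a₁ a₂ a₃ b₁ b₂ b₃ c₁₂ c₁₃ c₂₃
      = reindex eIdx eIdx
          (fromBlocks (quotientK a₁ a₂ a₃ b₁ b₂ b₃ c₁₂ c₁₃ c₂₃) 0 0
            (diagonal ![a₁ - b₁, a₂ - b₂, a₃ - b₃])) := by
  ext i j
  fin_cases i <;> fin_cases j <;> rfl

lemma charpoly_diag (d : Fin 3 → ℝ) :
    (diagonal d).charpoly = ∏ i, (X - C (d i)) := by
  rw [Matrix.charpoly, charmatrix, scalar_apply, RingHom.mapMatrix_apply,
    Matrix.diagonal_map (map_zero _), diagonal_sub, det_diagonal]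

lemma sparseQ_charpoly (a₁ a₂ a₃ b₁ b₂ b₃ c₁₂ c₁₃ c₂₃ : ℝ) :
    (sparseQ a₁ a₂ a₃ b₁ b₂ b₃ c₁₂ c₁₃ c₂₃).charpoly
      = (quotientK a₁ a₂ a₃ b₁ b₂ b₃ c₁₂ c₁₃ c₂₃).charpoly *
        ((X - C (a₁ - b₁)) * (X - C (a₂ - b₂)) * (X - C (a₃ - b₃))) := by
  rw [sparse_eq, Matrix.charpoly_reindex, Matrix.charpoly_fromBlocks_zero₂₁, charpoly_diag,
    Fin.prod_univ_three]
  simp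

/-- In the six-state model the characteristic polynomial of `P` factors as
`charpoly(P) = charpoly(K) · (X - β₁)(X - β₂)(X - β₃)` with `β_r = a_r - b_r`; equivalently
the eigenvalue multiset of `P` is `{1, κ₂, κ₃, β₁, β₂, β₃}` where `1, κ₂, κ₃` are the
eigenvalues of `K`. -/
theorem sixState_charpoly_factorization
    (a₁ a₂ a₃ b₁ b₂ b₃ c₁₂ c₁₃ c₂₃ : ℝ)
    (ha₁ : 0 ≤ a₁) (ha₂ : 0 ≤ a₂) (ha₃ : 0 ≤ a₃)
    (hb₁ : 0 ≤ b₁) (hb₂ : 0 ≤ b₂) (hb₃ : 0 ≤ b₃)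
    (hc₁₂ : 0 ≤ c₁₂) (hc₁₃ : 0 ≤ c₁₃) (hc₂₃ : 0 ≤ c₂₃)
    (hrow₁ : a₁ + b₁ + 2 * c₁₂ + 2 * c₁₃ = 1)
    (hrow₂ : a₂ + b₂ + 2 * c₁₂ + 2 * c₂₃ = 1)
    (hrow₃ : a₃ + b₃ + 2 * c₁₃ + 2 * c₂₃ = 1) :
    (sixStateP a₁ a₂ a₃ b₁ b₂ b₃ c₁₂ c₁₃ c₂₃).charpoly
      = (quotientK a₁ a₂ a₃ b₁ b₂ b₃ c₁₂ c₁₃ c₂₃).charpoly *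
        ((X - C (a₁ - b₁)) * (X - C (a₂ - b₂)) * (X - C (a₃ - b₃))) := by
  rw [← charpoly_conj_aux hadU hadV _ hadUV, conj_eq, sparseQ_charpoly]
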